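/- Let β > 0 and x* ∈ X*. Then x* ∈ Λ_A^{β+1} if and only if there exists y* ∈ X* with y* = A* x* in the mild sense (i.e. ⟨y*, T_t x⟩ = ⟨x*, (d/dt T_t)(x)⟩ for all x ∈ X and t > 0) and y* ∈ Λ_A^β. Moreover there is a constant C > 1, independent of x*, such that C^{−1} ‖x*‖_{Λ_A^{β+1}} ≤ ‖x*‖_{X*} + ‖A* x*‖_{Λ_A^β} ≤ C ‖x*‖_{Λ_A^{β+1}} for all such x*. -/

import Mathlib

open Filter Topology MeasureTheory Set

set_option maxHeartbeats 800000
set_option linter.unusedSectionVars false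
set_option linter.unusedVariables false

noncomputable section

variable {X : Type*} [NormedAddCommGroup X] [NormedSpace ℂ X] [CompleteSpace X]

/-- The `n`-th derivative on `(0,∞)` of the orbit `t ↦ x* ∘ T t` of the dual semigroup. -/
def dualDeriv (T : ℝ → X →L[ℂ] X) (n : ℕ) (xs : X →L[ℂ] ℂ) (t : ℝ) : X →L[ℂ] ℂ :=
  iteratedDerivWithin n (fun s => xs.comp (T s)) (Set.Ioi 0) t

/-- A uniformly bounded, strongly continuous holomorphic semigroup on `(0,∞)`,
together with the standard properties of its time derivatives. -/
structure IsHoloSG (T : ℝ → X →L[ℂ] X) : Prop where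
  semigroup : ∀ s t : ℝ, 0 < s → 0 < t → T (s + t) = (T s).comp (T t)
  strong : ∀ x : X, Tendsto (fun t => T t x) (𝓝[>] (0:ℝ)) (𝓝 x)
  bounded : ∃ M : ℝ, ∀ t : ℝ, 0 < t → ‖T t‖ ≤ M
  smooth : ContDiffOn ℝ (⊤ : ℕ∞) T (Set.Ioi 0)
  derivComp : ∀ n : ℕ, ∀ s t : ℝ, 0 < s → 0 < t →
    iteratedDerivWithin n T (Set.Ioi 0) (t + s)
      = (iteratedDerivWithin n T (Set.Ioi 0) t).comp (T s)
  derivBound : ∃ C : ℝ, 0 < C ∧ ∀ n : ℕ, 1 ≤ n → ∀ t : ℝ, 0 < t →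
    ‖iteratedDerivWithin n T (Set.Ioi 0) t‖ ≤ C ^ n / t ^ n

/-- The smallest integer `> β` (for `β > 0`). -/
def mExp (β : ℝ) : ℕ := ⌊β⌋₊ + 1

/-- Membership in the Lipschitz space `Λ_A^β`. -/
def MemLambda (T : ℝ → X →L[ℂ] X) (β : ℝ) (xs : X →L[ℂ] ℂ) : Prop :=
  ∃ C : ℝ, ∀ t : ℝ, 0 < t →
    ‖dualDeriv T (mExp β) xs t‖ ≤ C * t ^ (β - (mExp β : ℝ))

/-- The norm of the Lipschitz space `Λ_A^β`. -/
def lambdaNorm (T : ℝ → X →L[ℂ] X) (β : ℝ) (xs : X →L[ℂ] ℂ) : ℝ :=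
  ‖xs‖ + ⨆ t : Set.Ioi (0:ℝ),
    (t : ℝ) ^ ((mExp β : ℝ) - β) * ‖dualDeriv T (mExp β) xs t‖

/-- `y* = A* x*` in the mild sense: `⟨y*, T_t x⟩ = ⟨x*, (d/dt T_t)(x)⟩`
for all `x ∈ X`, `t > 0`. -/
def MildAStar (T : ℝ → X →L[ℂ] X) (xs ys : X →L[ℂ] ℂ) : Prop :=
  ∀ (x : X) (t : ℝ), 0 < t →
    ys (T t x) = xs ((iteratedDerivWithin 1 T (Set.Ioi 0) t) x)


variable {T : ℝ → X →L[ℂ] X}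

private lemma udo : UniqueDiffOn ℝ (Set.Ioi (0:ℝ)) := uniqueDiffOn_Ioi 0

private lemma clm_iter {F G : Type*} [NormedAddCommGroup F] [NormedSpace ℝ F]
    [NormedAddCommGroup G] [NormedSpace ℝ G] (g : F →L[ℝ] G) {f : ℝ → F}
    (hf : ContDiffOn ℝ (⊤:ℕ∞) f (Set.Ioi 0)) {t : ℝ} (ht : t ∈ Set.Ioi (0:ℝ)) (i : ℕ) :
    iteratedDerivWithin i (fun s => g (f s)) (Set.Ioi 0) t
      = g (iteratedDerivWithin i f (Set.Ioi 0) t) := by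
  have h := g.iteratedFDerivWithin_comp_left (f := f) (hf t ht) udo ht (i := i) (by exact_mod_cast le_top)
  rw [iteratedDerivWithin_eq_iteratedFDerivWithin, iteratedDerivWithin_eq_iteratedFDerivWithin,
    show (fun s => g (f s)) = g ∘ f from rfl, h]
  rfl

private lemma orbit_smooth (hT : IsHoloSG T) (xs : X →L[ℂ] ℂ) :
    ContDiffOn ℝ (⊤:ℕ∞) (fun s => xs.comp (T s)) (Set.Ioi 0) := by
  have h : ContDiff ℝ (⊤:ℕ∞) fun B : X →L[ℂ] X =>
      (((ContinuousLinearMap.compL ℂ X X ℂ) xs).restrictScalars ℝ) B :=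
    ContinuousLinearMap.contDiff _
  exact h.comp_contDiffOn hT.smooth

private lemma dualDeriv_eq (hT : IsHoloSG T) (xs : X →L[ℂ] ℂ) (n : ℕ) {t : ℝ} (ht : 0 < t) :
    dualDeriv T n xs t = xs.comp (iteratedDerivWithin n T (Set.Ioi 0) t) :=
  clm_iter (((ContinuousLinearMap.compL ℂ X X ℂ) xs).restrictScalars ℝ) hT.smooth ht n

private lemma dualDeriv_hasDerivAt (hT : IsHoloSG T) (xs : X →L[ℂ] ℂ) (n : ℕ) {t : ℝ}
    (ht : 0 < t) : HasDerivAt (dualDeriv T n xs) (dualDeriv T (n+1) xs t) t := by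
  have hf := orbit_smooth hT xs
  have hd : DifferentiableWithinAt ℝ
      (iteratedDerivWithin n (fun s => xs.comp (T s)) (Set.Ioi 0)) (Set.Ioi 0) t :=
    (hf.differentiableOn_iteratedDerivWithin (by exact_mod_cast WithTop.coe_lt_top _) udo) t ht
  have h1 := hd.hasDerivWithinAt.hasDerivAt (isOpen_Ioi.mem_nhds ht)
  have h2 : dualDeriv T (n+1) xs t
      = derivWithin (iteratedDerivWithin n (fun s => xs.comp (T s)) (Set.Ioi 0)) (Set.Ioi 0) t :=
    congrFun iteratedDerivWithin_succ t
  rw [show dualDeriv T n xs = iteratedDerivWithin n (fun s => xs.comp (T s)) (Set.Ioi 0) from rfl,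
    h2]
  exact h1

private lemma dualDeriv_continuousOn (hT : IsHoloSG T) (xs : X →L[ℂ] ℂ) (n : ℕ) :
    ContinuousOn (dualDeriv T n xs) (Set.Ioi 0) := fun t ht =>
  ((dualDeriv_hasDerivAt hT xs n ht).continuousAt).continuousWithinAt

private lemma dualDeriv_norm_le (hT : IsHoloSG T) {C : ℝ} (hC : ∀ n : ℕ, 1 ≤ n → ∀ t : ℝ, 0 < t →
    ‖iteratedDerivWithin n T (Set.Ioi 0) t‖ ≤ C ^ n / t ^ n) (xs : X →L[ℂ] ℂ) {n : ℕ}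
    (hn : 1 ≤ n) {t : ℝ} (ht : 0 < t) : ‖dualDeriv T n xs t‖ ≤ ‖xs‖ * (C ^ n / t ^ n) := by
  rw [dualDeriv_eq hT xs n ht]
  exact (ContinuousLinearMap.opNorm_comp_le _ _).trans
    (mul_le_mul_of_nonneg_left (hC n hn t ht) (norm_nonneg xs))

private lemma mild_shift (hT : IsHoloSG T) {xs ys : X →L[ℂ] ℂ} (h : MildAStar T xs ys) (n : ℕ)
    {t : ℝ} (ht : 0 < t) : dualDeriv T (n+1) xs t = dualDeriv T n ys t := by
  have hg : ContDiffOn ℝ (⊤:ℕ∞) (derivWithin T (Set.Ioi 0)) (Set.Ioi 0) :=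
    hT.smooth.derivWithin udo (by simp)
  have heq : Set.EqOn (fun s => xs.comp (derivWithin T (Set.Ioi 0) s))
      (fun s => ys.comp (T s)) (Set.Ioi 0) := by
    intro s hs; ext x
    have h1 := h x s hs
    rw [iteratedDerivWithin_one] at h1
    simpa using h1.symm
  calc dualDeriv T (n+1) xs t = xs.comp (iteratedDerivWithin (n+1) T (Set.Ioi 0) t) :=
        dualDeriv_eq hT xs _ ht
  _ = xs.comp (iteratedDerivWithin n (derivWithin T (Set.Ioi 0)) (Set.Ioi 0) t) := by
        rw [iteratedDerivWithin_succ']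
  _ = iteratedDerivWithin n (fun s => xs.comp (derivWithin T (Set.Ioi 0) s)) (Set.Ioi 0) t :=
        (clm_iter (((ContinuousLinearMap.compL ℂ X X ℂ) xs).restrictScalars ℝ) hg ht n).symm
  _ = iteratedDerivWithin n (fun s => ys.comp (T s)) (Set.Ioi 0) t :=
        iteratedDerivWithin_congr heq ht
  _ = dualDeriv T n ys t := rfl

private lemma gen0 (hT : IsHoloSG T) (xs : X →L[ℂ] ℂ) (k : ℕ) {a b : ℝ} (ha : 0 < a)
    (hab : a ≤ b) {φ : ℝ → ℝ} (hφ : IntervalIntegrable φ volume a b)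
    (hb : ∀ s ∈ Set.Icc a b, ‖dualDeriv T (k+1) xs s‖ ≤ φ s) :
    ‖dualDeriv T k xs b - dualDeriv T k xs a‖ ≤ ∫ s in a..b, φ s := by
  have hsub : Set.uIcc a b = Set.Icc a b := Set.uIcc_of_le hab
  have hpos : ∀ s ∈ Set.Icc a b, (0:ℝ) < s := fun s hs => lt_of_lt_of_le ha hs.1
  have hder : ∀ s ∈ Set.uIcc a b, HasDerivAt (dualDeriv T k xs) (dualDeriv T (k+1) xs s) s := by
    intro s hs; rw [hsub] at hs; exact dualDeriv_hasDerivAt hT xs k (hpos s hs)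
  have hcont : ContinuousOn (dualDeriv T (k+1) xs) (Set.uIcc a b) := by
    rw [hsub]; exact (dualDeriv_continuousOn hT xs (k+1)).mono (fun s hs => hpos s hs)
  have hint : IntervalIntegrable (dualDeriv T (k+1) xs) volume a b := hcont.intervalIntegrable
  have heq := intervalIntegral.integral_eq_sub_of_hasDerivAt hder hint
  have hnonneg : 0 ≤ ∫ s in a..b, φ s := by
    apply intervalIntegral.integral_nonneg hab
    intro s hs
    exact (norm_nonneg _).trans (hb s hs)
  calc ‖dualDeriv T k xs b - dualDeriv T k xs a‖ = ‖∫ s in a..b, dualDeriv T (k+1) xs s‖ := by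
        rw [heq]
  _ ≤ |∫ s in a..b, φ s| := by
        refine intervalIntegral.norm_integral_le_abs_of_norm_le ?_ hφ
        refine (ae_restrict_iff' measurableSet_uIoc).2 (Eventually.of_forall fun s hs => ?_)
        rw [Set.uIoc_of_le hab] at hs
        exact hb s (Set.Ioc_subset_Icc_self hs)
  _ = ∫ s in a..b, φ s := abs_of_nonneg hnonneg

private lemma gen (hT : IsHoloSG T) (xs : X →L[ℂ] ℂ) (k : ℕ) {a b : ℝ} (ha : 0 < a)
    (hab : a ≤ b) {φ : ℝ → ℝ} (hφ : IntervalIntegrable φ volume a b)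
    (hb : ∀ s ∈ Set.Icc a b, ‖dualDeriv T (k+1) xs s‖ ≤ φ s) :
    ‖dualDeriv T k xs a‖ ≤ ‖dualDeriv T k xs b‖ + ∫ s in a..b, φ s := by
  have h1 := gen0 hT xs k ha hab hφ hb
  calc ‖dualDeriv T k xs a‖ = ‖dualDeriv T k xs b - (dualDeriv T k xs b - dualDeriv T k xs a)‖ :=
        by rw [sub_sub_cancel]
  _ ≤ ‖dualDeriv T k xs b‖ + ‖dualDeriv T k xs b - dualDeriv T k xs a‖ := norm_sub_le _ _
  _ ≤ ‖dualDeriv T k xs b‖ + ∫ s in a..b, φ s := by linarith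

private lemma int_rpow_le {t γ : ℝ} (ht : 0 < t) (hγ : -1 < γ) (hγ1 : γ + 1 ≤ 1 ∨ True) :
    ∫ s in t..1, s ^ γ ≤ 1 / (γ + 1) := by
  rw [integral_rpow (Or.inl hγ)]
  have h1 : (0:ℝ) ≤ t ^ (γ+1) := Real.rpow_nonneg ht.le _
  have hγ0 : 0 < γ + 1 := by linarith
  rw [Real.one_rpow]
  gcongr
  exact sub_le_self 1 h1

private lemma int_inv_le {t : ℝ} (ht : 0 < t) (ht1 : t ≤ 1) :
    ∫ s in t..1, s⁻¹ = -Real.log t := by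
  rw [integral_inv (by rw [Set.uIcc_of_le ht1]; intro h; exact absurd h.1 (not_le.2 ht))]
  rw [one_div, Real.log_inv]

private lemma int_neg_log_le {t : ℝ} (ht : 0 < t) (ht1 : t ≤ 1) :
    ∫ s in t..1, -Real.log s ≤ 1 := by
  rw [intervalIntegral.integral_neg, integral_log]
  have h1 : t * Real.log t ≤ 0 :=
    mul_nonpos_of_nonneg_of_nonpos ht.le (Real.log_nonpos ht.le ht1)
  simp only [Real.log_one]
  nlinarith

private lemma core (hT : IsHoloSG T) {β : ℝ} (hβ : 0 < β) :
    ∃ K : ℝ, 1 ≤ K ∧ ∀ (xs : X →L[ℂ] ℂ) (S : ℝ), 0 ≤ S →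
      (∀ t : ℝ, 0 < t → ‖dualDeriv T (mExp β + 1) xs t‖ ≤ S * t ^ (β - (mExp β : ℝ))) →
      (∀ t : ℝ, 0 < t → t ≤ 1 → ‖dualDeriv T 1 xs t‖ ≤ K * (‖xs‖ + S)) ∧
      (∀ t : ℝ, 0 < t → t ≤ 1 →
        ‖dualDeriv T 2 xs t‖ ≤ K * (‖xs‖ + S) * (1 + (-Real.log t) + t ^ (β - 1))) := by
  obtain ⟨C, hC0, hCb⟩ := hT.derivBound
  set m := mExp β with hmdef
  have hm1 : 1 ≤ m := Nat.le_add_left 1 _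
  have hmβ : β < (m : ℝ) := by
    have := Nat.lt_floor_add_one β
    push_cast [hmdef, mExp]
    push_cast at this
    linarith
  have hβm : (m : ℝ) ≤ β + 1 := by
    have := Nat.floor_le hβ.le
    push_cast [hmdef, mExp]
    linarith
  set M := max C 1 with hMdef
  have hM1 : (1:ℝ) ≤ M := le_max_right _ _
  have hMm1 : (1:ℝ) ≤ M ^ m := one_le_pow₀ hM1
  have hβi : (0:ℝ) < 1/β := one_div_pos.2 hβ
  have hQb : ∀ (xs : X →L[ℂ] ℂ), ∀ k : ℕ, 1 ≤ k → k ≤ m →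
      ‖dualDeriv T k xs 1‖ ≤ ‖xs‖ * M ^ m := by
    intro xs k hk hkm
    have h1 := dualDeriv_norm_le hT hCb xs hk one_pos
    simp only [one_pow, div_one] at h1
    refine h1.trans (mul_le_mul_of_nonneg_left ?_ (norm_nonneg xs))
    calc C ^ k ≤ M ^ k := pow_le_pow_left₀ hC0.le (le_max_left _ _) k
    _ ≤ M ^ m := pow_le_pow_right₀ hM1 hkm
  refine ⟨((m:ℝ) + 2) * (M ^ m + 1/β + 1), ?_, ?_⟩
  · nlinarith [hβi, (by positivity : (0:ℝ) ≤ (m:ℝ)), hMm1,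
      mul_le_mul_of_nonneg_left (by nlinarith [hβi] : (1:ℝ) ≤ M ^ m + 1/β + 1)
        (by positivity : (0:ℝ) ≤ (m:ℝ)+2)]
  intro xs S hS hbound
  set K := ((m:ℝ) + 2) * (M ^ m + 1/β + 1) with hKdef
  set Q := ‖xs‖ * M ^ m with hQdef
  have hm0 : (0:ℝ) ≤ (m:ℝ) := by positivity
  have hQ0 : 0 ≤ Q := by positivity
  have hK1 : (1:ℝ) ≤ K := by
    rw [hKdef]
    nlinarith [hβi, hm0, hMm1,
      mul_le_mul_of_nonneg_left (by linarith : (1:ℝ) ≤ M ^ m + 1/β + 1)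
        (by linarith : (0:ℝ) ≤ (m:ℝ)+2)]
  have hcoefQ : ∀ c : ℝ, 0 ≤ c → c + 2 ≤ (m:ℝ) + 2 → (c + 2) * Q ≤ K * ‖xs‖ := by
    intro c hc hcm
    have h1 : (c + 2) * M ^ m ≤ K := by
      rw [hKdef]
      nlinarith [hβi, hm0, mul_le_mul_of_nonneg_right hcm (le_trans zero_le_one hMm1),
        mul_nonneg (by linarith : (0:ℝ) ≤ (m:ℝ)+2) (by linarith : (0:ℝ) ≤ 1/β+1)]
    calc (c + 2) * Q = ((c + 2) * M ^ m) * ‖xs‖ := by rw [hQdef]; ring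
    _ ≤ K * ‖xs‖ := mul_le_mul_of_nonneg_right h1 (norm_nonneg xs)
  have hcoefS : ∀ c : ℝ, 0 ≤ c → c + 1 ≤ (m:ℝ) + 1 → (c + 1) * S ≤ K * S := by
    intro c hc hcm
    refine mul_le_mul_of_nonneg_right ?_ hS
    rw [hKdef]
    nlinarith [hβi, hm0, hMm1,
      mul_le_mul_of_nonneg_left (by linarith : (1:ℝ) ≤ M ^ m + 1/β + 1)
        (by linarith : (0:ℝ) ≤ (m:ℝ)+2)]
  have hKS : S ≤ K * S := by
    nlinarith [mul_le_mul_of_nonneg_right hK1 hS]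
  have hKQ : Q ≤ K * ‖xs‖ := by
    have := hcoefQ 0 le_rfl (by linarith)
    linarith
  have hA0 : 0 ≤ K * (‖xs‖ + S) := by positivity
  have hK0 : (0:ℝ) ≤ K := by linarith
  have hQA : Q ≤ K * (‖xs‖ + S) := by
    have h0 : 0 ≤ K * S := mul_nonneg hK0 hS
    rw [mul_add]; linarith
  have hSA : S ≤ K * (‖xs‖ + S) := by
    have h0 : 0 ≤ K * ‖xs‖ := mul_nonneg hK0 (norm_nonneg xs)
    rw [mul_add]; linarith
  have hQSA : Q + S ≤ K * (‖xs‖ + S) := by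
    rw [mul_add]
    linarith
  rcases Nat.lt_or_ge m 2 with hm2 | hm2
  · -- m = 1
    have hm : m = 1 := by omega
    have hβ1 : β < 1 := by rw [hm] at hmβ; exact_mod_cast hmβ
    have hγ : (-1:ℝ) < β - 1 := by linarith
    have hexp1 : β - (m:ℝ) = β - 1 := by rw [hm]; norm_num
    have hD1 : ∀ t : ℝ, 0 < t → t ≤ 1 → ‖dualDeriv T 1 xs t‖ ≤ Q + S * (1/β) := by
      intro t ht ht1
      have hφ : IntervalIntegrable (fun s => S * s ^ (β - 1)) volume t 1 :=
        (intervalIntegral.intervalIntegrable_rpow' hγ).const_mul S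
      have hb : ∀ s ∈ Set.Icc t 1, ‖dualDeriv T 2 xs s‖ ≤ S * s ^ (β - 1) := by
        intro s hs
        have h9 := hbound s (lt_of_lt_of_le ht hs.1)
        rw [hexp1, show m + 1 = 2 from by omega] at h9
        exact h9
      have h2 := gen hT xs 1 ht ht1 hφ hb
      have h3 : ∫ s in t..1, S * s ^ (β - 1) ≤ S * (1/β) := by
        rw [intervalIntegral.integral_const_mul]
        have h4 := int_rpow_le ht hγ (Or.inr trivial)
        have h5 : β - 1 + 1 = β := by ring
        rw [h5] at h4
        exact mul_le_mul_of_nonneg_left h4 hS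
      have h6 := hQb xs 1 le_rfl (le_of_eq hm.symm)
      rw [← hQdef] at h6
      linarith
    constructor
    · intro t ht ht1
      have h1 := hD1 t ht ht1
      have h3 : S * (1/β) ≤ K * S := by
        rw [hKdef]
        have h4 : (1:ℝ)/β ≤ ((m:ℝ)+2) * (M ^ m + 1/β + 1) := by
          nlinarith [hβi, hm0, hMm1]
        calc S * (1/β) = (1/β) * S := by ring
        _ ≤ (((m:ℝ)+2) * (M ^ m + 1/β + 1)) * S := mul_le_mul_of_nonneg_right h4 hS
      rw [mul_add]
      linarith
    · intro t ht ht1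
      have h1 := hbound t ht
      rw [hexp1, show m + 1 = 2 from by omega] at h1
      have hlog : 0 ≤ -Real.log t := by
        simpa using Real.log_nonpos ht.le ht1
      have hrp : (0:ℝ) ≤ t ^ (β - 1) := Real.rpow_nonneg ht.le _
      calc ‖dualDeriv T 2 xs t‖ ≤ S * t ^ (β - 1) := h1
      _ ≤ (K * (‖xs‖ + S)) * t ^ (β - 1) := mul_le_mul_of_nonneg_right hSA hrp
      _ ≤ K * (‖xs‖ + S) * (1 + (-Real.log t) + t ^ (β - 1)) :=
          mul_le_mul_of_nonneg_left (by linarith) hA0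
  · -- m ≥ 2
    obtain ⟨p, hp⟩ : ∃ p, m = p + 2 := ⟨m - 2, by omega⟩
    have hmp : (m:ℝ) = (p:ℝ) + 2 := by exact_mod_cast congrArg (Nat.cast : ℕ → ℝ) hp
    have hp0 : (0:ℝ) ≤ (p:ℝ) := by positivity
    have hStepA : ∀ s : ℝ, 0 < s → s ≤ 1 →
        ‖dualDeriv T m xs s‖ ≤ Q - S * Real.log s := by
      intro s hs hs1
      have hsub : Set.uIcc s 1 ⊆ {x : ℝ | x ≠ 0} := by
        rw [Set.uIcc_of_le hs1]
        intro u hu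
        exact ne_of_gt (lt_of_lt_of_le hs hu.1)
      have hφ : IntervalIntegrable (fun u : ℝ => S * u⁻¹) volume s 1 :=
        ((continuousOn_inv₀.mono hsub).intervalIntegrable).const_mul S
      have hb : ∀ u ∈ Set.Icc s 1, ‖dualDeriv T (m + 1) xs u‖ ≤ S * u⁻¹ := by
        intro u hu
        have hu0 : 0 < u := lt_of_lt_of_le hs hu.1
        refine (hbound u hu0).trans ?_
        have h2 : u ^ (β - (m:ℝ)) ≤ u ^ (-1:ℝ) := by
          apply Real.rpow_le_rpow_of_exponent_ge hu0 hu.2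
          linarith
        rw [Real.rpow_neg_one] at h2
        exact mul_le_mul_of_nonneg_left h2 hS
      have h2 := gen hT xs m hs hs1 hφ hb
      have h3 : ∫ u in s..1, S * u⁻¹ = -(S * Real.log s) := by
        rw [intervalIntegral.integral_const_mul, int_inv_le hs hs1]
        ring
      have h4 := hQb xs m hm1 le_rfl
      rw [← hQdef] at h4
      rw [h3] at h2
      linarith
    have hStepB : ∀ t : ℝ, 0 < t → t ≤ 1 →
        ‖dualDeriv T (p + 1) xs t‖ ≤ 2 * Q + S := by
      intro t ht ht1
      have h0 : (0:ℝ) ∉ Set.uIcc t 1 := by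
        rw [Set.uIcc_of_le ht1]
        intro h
        exact absurd h.1 (not_le.2 ht)
      have hφ : IntervalIntegrable (fun u : ℝ => Q - S * Real.log u) volume t 1 :=
        intervalIntegrable_const.sub
          ((intervalIntegral.intervalIntegrable_log h0).const_mul S)
      have hb : ∀ u ∈ Set.Icc t 1, ‖dualDeriv T (p + 1 + 1) xs u‖ ≤ Q - S * Real.log u := by
        intro u hu
        have := hStepA u (lt_of_lt_of_le ht hu.1) hu.2
        rwa [show p + 1 + 1 = m from by omega]
      have h2 := gen hT xs (p+1) ht ht1 hφ hb
      have h3 : ∫ u in t..1, (Q - S * Real.log u) ≤ Q + S := by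
        rw [intervalIntegral.integral_sub intervalIntegrable_const
          ((intervalIntegral.intervalIntegrable_log h0).const_mul S),
          intervalIntegral.integral_const, intervalIntegral.integral_const_mul,
          integral_log, smul_eq_mul]
        simp only [Real.log_one]
        have hlt : t * Real.log t ≤ 0 :=
          mul_nonpos_of_nonneg_of_nonpos ht.le (Real.log_nonpos ht.le ht1)
        nlinarith [mul_nonneg ht.le hQ0, mul_nonneg hS (neg_nonneg.2 hlt),
          mul_nonneg hS ht.le]
      have h8 := hQb xs (p+1) (by omega) (by omega)
      rw [← hQdef] at h8
      linarith
    have hStepC : ∀ d : ℕ, ∀ k : ℕ, 1 ≤ k → k + d + 1 = m → ∀ t : ℝ, 0 < t → t ≤ 1 →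
        ‖dualDeriv T k xs t‖ ≤ ((d:ℝ) + 2) * Q + ((d:ℝ) + 1) * S := by
      intro d
      induction d with
      | zero =>
        intro k hk hkm t ht ht1
        have hkp : k = p + 1 := by omega
        rw [hkp]
        have := hStepB t ht ht1
        push_cast
        linarith
      | succ d ih =>
        intro k hk hkm t ht ht1
        set B := ((d:ℝ) + 2) * Q + ((d:ℝ) + 1) * S with hBdef
        have hd0 : (0:ℝ) ≤ (d:ℝ) := by positivity
        have hB0 : 0 ≤ B := by positivity
        have hb : ∀ u ∈ Set.Icc t 1, ‖dualDeriv T (k + 1) xs u‖ ≤ B :=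
          fun u hu => ih (k+1) (by omega) (by omega) u (lt_of_lt_of_le ht hu.1) hu.2
        have h2 := gen hT xs k ht ht1 intervalIntegrable_const hb
        have h3 : ∫ _ in t..1, B ≤ B := by
          rw [intervalIntegral.integral_const, smul_eq_mul]
          nlinarith [mul_nonneg ht.le hB0]
        have h8 := hQb xs k hk (by omega)
        rw [← hQdef] at h8
        push_cast
        rw [hBdef] at h3 h2
        have h9 : ‖xs‖ ≤ Q := by
          rw [hQdef]
          nlinarith [mul_nonneg (by linarith : (0:ℝ) ≤ M ^ m - 1) (norm_nonneg xs)]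
        linarith
    constructor
    · intro t ht ht1
      have h1 := hStepC p 1 le_rfl (by omega) t ht ht1
      have hc1 : ((p:ℝ) + 2) * Q ≤ K * ‖xs‖ := hcoefQ p hp0 (by rw [hmp]; linarith)
      have hc2 : ((p:ℝ) + 1) * S ≤ K * S := hcoefS p hp0 (by rw [hmp]; linarith)
      rw [mul_add]
      linarith
    · intro t ht ht1
      have hlog : 0 ≤ -Real.log t := by
        simpa using Real.log_nonpos ht.le ht1
      have hrp : (0:ℝ) ≤ t ^ (β - 1) := Real.rpow_nonneg ht.le _
      have hD2 : ‖dualDeriv T 2 xs t‖ ≤ K * (‖xs‖ + S) * (1 + (-Real.log t)) := by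
        rcases Nat.lt_or_ge m 3 with hm3 | hm3
        · -- m = 2
          have hm2' : m = 2 := by omega
          have h1 := hStepA t ht ht1
          rw [hm2'] at h1
          have h5 : Q - S * Real.log t = Q + S * (-Real.log t) := by ring
          rw [h5] at h1
          calc ‖dualDeriv T 2 xs t‖ ≤ Q + S * (-Real.log t) := h1
          _ ≤ K * (‖xs‖ + S) + (K * (‖xs‖ + S)) * (-Real.log t) :=
              add_le_add hQA (mul_le_mul_of_nonneg_right hSA hlog)
          _ = K * (‖xs‖ + S) * (1 + (-Real.log t)) := by ring
        · -- m ≥ 3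
          obtain ⟨q, hq⟩ : ∃ q, m = q + 3 := ⟨m - 3, by omega⟩
          have hmq : (m:ℝ) = (q:ℝ) + 3 := by exact_mod_cast congrArg (Nat.cast : ℕ → ℝ) hq
          have hq0 : (0:ℝ) ≤ (q:ℝ) := by positivity
          have h1 := hStepC q 2 (by omega) (by omega) t ht ht1
          have hc1 : ((q:ℝ) + 2) * Q ≤ K * ‖xs‖ := hcoefQ q hq0 (by rw [hmq]; linarith)
          have hc2 : ((q:ℝ) + 1) * S ≤ K * S := hcoefS q hq0 (by rw [hmq]; linarith)
          have h2 : ‖dualDeriv T 2 xs t‖ ≤ K * (‖xs‖ + S) := by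
            rw [mul_add]
            linarith
          calc ‖dualDeriv T 2 xs t‖ ≤ K * (‖xs‖ + S) := h2
          _ = K * (‖xs‖ + S) * 1 := by ring
          _ ≤ K * (‖xs‖ + S) * (1 + (-Real.log t)) :=
              mul_le_mul_of_nonneg_left (by linarith) hA0
      calc ‖dualDeriv T 2 xs t‖ ≤ K * (‖xs‖ + S) * (1 + (-Real.log t)) := hD2
      _ ≤ K * (‖xs‖ + S) * (1 + (-Real.log t) + t ^ (β - 1)) :=
          mul_le_mul_of_nonneg_left (by linarith) hA0

private lemma ys_norm_le (hT : IsHoloSG T) {xs ys : X →L[ℂ] ℂ} (h : MildAStar T xs ys) {B : ℝ}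
    (hb : ∀ t : ℝ, 0 < t → t ≤ 1 → ‖dualDeriv T 1 xs t‖ ≤ B) : ‖ys‖ ≤ B := by
  have hB : 0 ≤ B := le_trans (norm_nonneg _) (hb 1 one_pos le_rfl)
  refine ContinuousLinearMap.opNorm_le_bound ys hB (fun x => ?_)
  have h1 : Tendsto (fun t => ys (T t x)) (𝓝[>] (0:ℝ)) (𝓝 (ys x)) :=
    (ys.continuous.continuousAt.tendsto).comp (hT.strong x)
  have h2 : ∀ᶠ t in 𝓝[>] (0:ℝ), ‖ys (T t x)‖ ≤ B * ‖x‖ := by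
    filter_upwards [Ioc_mem_nhdsGT one_pos] with t ht
    have h3 : ys (T t x) = (dualDeriv T 1 xs t) x := by
      rw [dualDeriv_eq hT xs 1 ht.1]
      simpa using h x t ht.1
    rw [h3]
    calc ‖(dualDeriv T 1 xs t) x‖ ≤ ‖dualDeriv T 1 xs t‖ * ‖x‖ :=
          ContinuousLinearMap.le_opNorm _ x
    _ ≤ B * ‖x‖ := mul_le_mul_of_nonneg_right (hb t ht.1 ht.2) (norm_nonneg x)
  exact le_of_tendsto h1.norm h2

private lemma exists_mild (hT : IsHoloSG T) {β : ℝ} (hβ : 0 < β) (xs : X →L[ℂ] ℂ) {S : ℝ}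
    (hS : 0 ≤ S)
    (hbound : ∀ t : ℝ, 0 < t → ‖dualDeriv T (mExp β + 1) xs t‖ ≤ S * t ^ (β - (mExp β : ℝ))) :
    ∃ ys : X →L[ℂ] ℂ, MildAStar T xs ys := by
  obtain ⟨K, hK1, hcore⟩ := core hT hβ
  obtain ⟨hD1, hD2⟩ := hcore xs S hS hbound
  set A := K * (‖xs‖ + S) with hA
  have hA0 : (0:ℝ) ≤ A := by
    rw [hA]; positivity
  set ψ : ℝ → ℝ := fun u => A * (1 + (-Real.log u) + u ^ (β - 1)) with hψdef
  set Φ : ℝ → ℝ := fun t => A * (t + (t - t * Real.log t) + t ^ β / β) with hΦdef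
  have hψd : ∀ u : ℝ, 0 < u → HasDerivAt Φ (ψ u) u := by
    intro u hu
    have h1 : HasDerivAt (fun t : ℝ => t) 1 u := hasDerivAt_id u
    have h2 : HasDerivAt (fun t : ℝ => t * Real.log t) (Real.log u + 1) u :=
      Real.hasDerivAt_mul_log hu.ne'
    have h3 : HasDerivAt (fun t : ℝ => t ^ β) (β * u ^ (β - 1)) u :=
      Real.hasDerivAt_rpow_const (Or.inl hu.ne')
    have h4 := ((h1.add (h1.sub h2)).add (h3.div_const β)).const_mul A
    convert h4 using 1
    case e'_4 => rfl
    case e'_5 => rfl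
    case e'_8 => rfl
    rw [hψdef]
    field_simp
    try ring
  have hψc : ∀ a b : ℝ, 0 < a → ContinuousOn ψ (Set.uIcc a b) ∨ True := fun _ _ _ => Or.inr trivial
  have hψcont : ∀ {a b : ℝ}, 0 < a → a ≤ b → ContinuousOn ψ (Set.uIcc a b) := by
    intro a b ha hab
    have hne : ∀ x ∈ Set.uIcc a b, x ≠ 0 := by
      rw [Set.uIcc_of_le hab]
      intro x hx
      exact ne_of_gt (lt_of_lt_of_le ha hx.1)
    have hlogc : ContinuousOn Real.log (Set.uIcc a b) :=
      Real.continuousOn_log.mono (fun x hx => hne x hx)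
    have hrpc : ContinuousOn (fun u : ℝ => u ^ (β - 1)) (Set.uIcc a b) :=
      ContinuousOn.rpow_const continuousOn_id (fun x hx => Or.inl (hne x hx))
    exact continuousOn_const.mul ((continuousOn_const.add hlogc.neg).add hrpc)
  have hFTC : ∀ s t : ℝ, 0 < s → s ≤ t → (∫ u in s..t, ψ u) = Φ t - Φ s := by
    intro s t hs hst
    refine intervalIntegral.integral_eq_sub_of_hasDerivAt (fun u hu => ?_)
      (hψcont hs hst).intervalIntegrable
    rw [Set.uIcc_of_le hst] at hu
    exact hψd u (lt_of_lt_of_le hs hu.1)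
  have hdiff : ∀ s t : ℝ, 0 < s → s ≤ t → t ≤ 1 →
      ‖dualDeriv T 1 xs t - dualDeriv T 1 xs s‖ ≤ Φ t - Φ s := by
    intro s t hs hst ht1
    have hb : ∀ u ∈ Set.Icc s t, ‖dualDeriv T (1+1) xs u‖ ≤ ψ u := by
      intro u hu
      exact hD2 u (lt_of_lt_of_le hs hu.1) (le_trans hu.2 ht1)
    have h1 := gen0 hT xs 1 hs hst (hψcont hs hst).intervalIntegrable hb
    rwa [hFTC s t hs hst] at h1
  have hΦmono : ∀ s t : ℝ, 0 < s → s ≤ t → t ≤ 1 → Φ s ≤ Φ t := by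
    intro s t hs hst ht1
    have h1 : 0 ≤ ∫ u in s..t, ψ u := by
      apply intervalIntegral.integral_nonneg hst
      intro u hu
      have hu0 : 0 < u := lt_of_lt_of_le hs hu.1
      have hu1 : u ≤ 1 := le_trans hu.2 ht1
      have hl : 0 ≤ -Real.log u := by simpa using Real.log_nonpos hu0.le hu1
      have hr : (0:ℝ) ≤ u ^ (β - 1) := Real.rpow_nonneg hu0.le _
      rw [hψdef]
      have : (0:ℝ) ≤ 1 + -Real.log u + u ^ (β - 1) := by linarith
      positivity
    rw [hFTC s t hs hst] at h1
    linarith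
  have hΦ0 : ∀ s : ℝ, 0 < s → s ≤ 1 → 0 ≤ Φ s := by
    intro s hs hs1
    rw [hΦdef]
    have h1 : 0 ≤ s - s * Real.log s := by
      have := mul_nonpos_of_nonneg_of_nonpos hs.le (Real.log_nonpos hs.le hs1)
      linarith
    have h2 : (0:ℝ) ≤ s ^ β / β := by positivity
    have h3 : (0:ℝ) ≤ s + (s - s * Real.log s) + s ^ β / β := by linarith
    positivity
  have hΦlim : Tendsto Φ (𝓝[>] (0:ℝ)) (𝓝 0) := by
    have l1 : Tendsto (fun t : ℝ => t) (𝓝[>] (0:ℝ)) (𝓝 0) :=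
      tendsto_id.mono_right nhdsWithin_le_nhds
    have l2 : Tendsto (fun t : ℝ => t * Real.log t) (𝓝[>] (0:ℝ)) (𝓝 0) := by
      have := tendsto_log_mul_rpow_nhdsGT_zero zero_lt_one
      simp only [Real.rpow_one] at this
      exact this.congr (fun x => mul_comm _ _)
    have l3 : Tendsto (fun t : ℝ => t ^ β) (𝓝[>] (0:ℝ)) (𝓝 0) := by
      have hc : ContinuousAt (fun x : ℝ => x ^ β) 0 :=
        Real.continuousAt_rpow_const 0 β (Or.inr hβ.le)
      have := hc.tendsto.mono_left (nhdsWithin_le_nhds (s := Set.Ioi (0:ℝ)))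
      rwa [Real.zero_rpow hβ.ne'] at this
    have h4 := ((l1.add (l1.sub l2)).add (l3.div_const β)).const_mul A
    rw [hΦdef]
    convert h4 using 2
    norm_num
  set v : ℕ → ℝ := fun n => 1 / ((n:ℝ) + 1) with hv
  have hvpos : ∀ n : ℕ, 0 < v n := fun n => by rw [hv]; positivity
  have hvle1 : ∀ n : ℕ, v n ≤ 1 := by
    intro n
    rw [hv]
    rw [div_le_one (by positivity)]
    simp
  have hvmono : ∀ {a b : ℕ}, a ≤ b → v b ≤ v a := by
    intro a b hab
    apply one_div_le_one_div_of_le (by positivity)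
    have : (a:ℝ) ≤ (b:ℝ) := by exact_mod_cast hab
    linarith
  set u : ℕ → (X →L[ℂ] ℂ) := fun n => dualDeriv T 1 xs (v n) with hu
  have hcauchy : CauchySeq u := by
    apply cauchySeq_of_le_tendsto_0 (fun N => Φ (v N))
    · intro n m N hn hm
      rw [dist_eq_norm]
      rcases le_total (v n) (v m) with hc | hc
      · have h1 := hdiff (v n) (v m) (hvpos n) hc (hvle1 m)
        have h2 : Φ (v m) ≤ Φ (v N) := hΦmono (v m) (v N) (hvpos m) (hvmono hm) (hvle1 N)
        have h3 : 0 ≤ Φ (v n) := hΦ0 (v n) (hvpos n) (hvle1 n)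
        rw [hu]
        rw [← norm_neg]
        simp only [neg_sub]
        linarith
      · have h1 := hdiff (v m) (v n) (hvpos m) hc (hvle1 n)
        have h2 : Φ (v n) ≤ Φ (v N) := hΦmono (v n) (v N) (hvpos n) (hvmono hn) (hvle1 N)
        have h3 : 0 ≤ Φ (v m) := hΦ0 (v m) (hvpos m) (hvle1 m)
        rw [hu]
        linarith
    · have hvt : Tendsto v atTop (𝓝[>] (0:ℝ)) := by
        rw [tendsto_nhdsWithin_iff]
        constructor
        · rw [hv]; exact tendsto_one_div_add_atTop_nhds_zero_nat
        · exact Eventually.of_forall (fun n => hvpos n)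
      exact hΦlim.comp hvt
  obtain ⟨ys, hys⟩ := cauchySeq_tendsto_of_complete hcauchy
  refine ⟨ys, ?_⟩
  intro x t ht
  have hueq : ∀ n : ℕ, u n (T t x) = xs (iteratedDerivWithin 1 T (Set.Ioi 0) (v n + t) x) := by
    intro n
    rw [hu]
    simp only []
    rw [dualDeriv_eq hT xs 1 (hvpos n)]
    rw [hT.derivComp 1 t (v n) ht (hvpos n)]
    simp
  have h1 : Tendsto (fun n => u n (T t x)) atTop (𝓝 (ys (T t x))) :=
    ((ContinuousLinearMap.apply ℂ ℂ (T t x)).continuous.tendsto ys).comp hys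
  have h1' : Tendsto (fun n => xs (iteratedDerivWithin 1 T (Set.Ioi 0) (v n + t) x)) atTop
      (𝓝 (ys (T t x))) := h1.congr hueq
  have h2 : Tendsto (fun n => xs (iteratedDerivWithin 1 T (Set.Ioi 0) (v n + t) x)) atTop
      (𝓝 (xs (iteratedDerivWithin 1 T (Set.Ioi 0) t x))) := by
    have hc0 : ContinuousOn (iteratedDerivWithin 1 T (Set.Ioi 0)) (Set.Ioi 0) :=
      hT.smooth.continuousOn_iteratedDerivWithin (by exact_mod_cast le_top) udo
    have hc1 : ContinuousAt (iteratedDerivWithin 1 T (Set.Ioi 0)) t :=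
      hc0.continuousAt (isOpen_Ioi.mem_nhds ht)
    have hc : ContinuousAt (fun r => xs (iteratedDerivWithin 1 T (Set.Ioi 0) r x)) t :=
      xs.continuous.continuousAt.comp
        ((ContinuousLinearMap.apply ℂ X x).continuous.continuousAt.comp hc1)
    have hvt : Tendsto (fun n => v n + t) atTop (𝓝 t) := by
      have := tendsto_one_div_add_atTop_nhds_zero_nat.add (tendsto_const_nhds (x := t))
      rw [hv]
      simpa [one_div] using this
    exact hc.tendsto.comp hvt
  exact tendsto_nhds_unique h1' h2


/-- `x* ∈ Λ_A^{β+1}` iff `A* x*` exists in the mild sense and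
belongs to `Λ_A^β`; moreover the norms `‖x*‖_{Λ_A^{β+1}}` and
`‖x*‖_{X*} + ‖A* x*‖_{Λ_A^β}` are equivalent, with constants independent of `x*`. -/
theorem stmt4 (T : ℝ → X →L[ℂ] X) (hT : IsHoloSG T) (β : ℝ) (hβ : 0 < β) :
    (∀ xs : X →L[ℂ] ℂ,
      (MemLambda T (β + 1) xs ↔
        ∃ ys : X →L[ℂ] ℂ, MildAStar T xs ys ∧ MemLambda T β ys)) ∧
    ∃ C : ℝ, 1 < C ∧ ∀ xs ys : X →L[ℂ] ℂ,
      MildAStar T xs ys → MemLambda T (β + 1) xs →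
      C⁻¹ * lambdaNorm T (β + 1) xs ≤ ‖xs‖ + lambdaNorm T β ys ∧
      ‖xs‖ + lambdaNorm T β ys ≤ C * lambdaNorm T (β + 1) xs := by
  obtain ⟨K, hK1, hcore⟩ := core hT hβ
  have hm : mExp (β + 1) = mExp β + 1 := by
    unfold mExp
    rw [Nat.floor_add_one hβ.le]
  have hexp : β + 1 - (mExp (β+1) : ℝ) = β - (mExp β : ℝ) := by
    rw [hm]; push_cast; ring
  have hexp2 : (mExp (β+1) : ℝ) - (β+1) = (mExp β : ℝ) - β := by
    rw [hm]; push_cast; ring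
  have hexp' : β + 1 - ((mExp β + 1 : ℕ) : ℝ) = β - (mExp β : ℝ) := by
    push_cast; ring
  constructor
  · intro xs
    constructor
    · rintro ⟨C₀, hC₀⟩
      set S := max C₀ 0 with hSdef
      have hS0 : 0 ≤ S := le_max_right _ _
      have hbound : ∀ t : ℝ, 0 < t →
          ‖dualDeriv T (mExp β + 1) xs t‖ ≤ S * t ^ (β - (mExp β : ℝ)) := by
        intro t ht
        have h1 := hC₀ t ht
        rw [hm, hexp'] at h1
        exact h1.trans
          (mul_le_mul_of_nonneg_right (le_max_left _ _) (Real.rpow_nonneg ht.le _))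
      obtain ⟨ys, hys⟩ := exists_mild hT hβ xs hS0 hbound
      refine ⟨ys, hys, S, fun t ht => ?_⟩
      rw [← mild_shift hT hys (mExp β) ht]
      exact hbound t ht
    · rintro ⟨ys, hmild, C₁, hC₁⟩
      refine ⟨C₁, fun t ht => ?_⟩
      rw [hm, hexp', mild_shift hT hmild (mExp β) ht]
      exact hC₁ t ht
  · refine ⟨K + 2, by linarith, fun xs ys hmild hmem => ?_⟩
    obtain ⟨C₀, hC₀⟩ := hmem
    set S := ⨆ t : Set.Ioi (0:ℝ),
      (t:ℝ) ^ ((mExp (β+1) : ℝ) - (β+1)) * ‖dualDeriv T (mExp (β+1)) xs t‖ with hSdef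
    have hbdd : BddAbove (Set.range fun t : Set.Ioi (0:ℝ) =>
        (t:ℝ) ^ ((mExp (β+1) : ℝ) - (β+1)) * ‖dualDeriv T (mExp (β+1)) xs t‖) := by
      refine ⟨max C₀ 0, ?_⟩
      rintro y ⟨t, rfl⟩
      have ht : (0:ℝ) < t := t.2
      have h1 := hC₀ t ht
      calc (t:ℝ) ^ ((mExp (β+1) : ℝ) - (β+1)) * ‖dualDeriv T (mExp (β+1)) xs t‖
          ≤ (t:ℝ) ^ ((mExp (β+1) : ℝ) - (β+1)) * (C₀ * (t:ℝ) ^ (β+1 - (mExp (β+1):ℝ))) :=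
            mul_le_mul_of_nonneg_left h1 (Real.rpow_nonneg ht.le _)
      _ = C₀ * ((t:ℝ) ^ ((mExp (β+1) : ℝ) - (β+1)) * (t:ℝ) ^ (β+1 - (mExp (β+1):ℝ))) := by
            ring
      _ = C₀ := by
            rw [← Real.rpow_add ht]
            norm_num
      _ ≤ max C₀ 0 := le_max_left _ _
    have hS0 : 0 ≤ S :=
      Real.iSup_nonneg (fun t => mul_nonneg (Real.rpow_nonneg (le_of_lt t.2) _) (norm_nonneg _))
    have hSb : ∀ t : ℝ, 0 < t →
        ‖dualDeriv T (mExp β + 1) xs t‖ ≤ S * t ^ (β - (mExp β : ℝ)) := by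
      intro t ht
      have h1 : (t:ℝ) ^ ((mExp (β+1) : ℝ) - (β+1)) * ‖dualDeriv T (mExp (β+1)) xs t‖ ≤ S :=
        le_ciSup hbdd ⟨t, ht⟩
      have ha : (0:ℝ) < t ^ ((mExp (β+1) : ℝ) - (β+1)) := Real.rpow_pos_of_pos ht _
      have h2 : ‖dualDeriv T (mExp (β+1)) xs t‖ ≤ S * (t ^ ((mExp (β+1) : ℝ) - (β+1)))⁻¹ := by
        rw [← div_eq_mul_inv, le_div_iff₀ ha, mul_comm]
        exact h1
      have h3 : (t ^ ((mExp (β+1) : ℝ) - (β+1)))⁻¹ = t ^ (β - (mExp β : ℝ)) := by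
        rw [← Real.rpow_neg ht.le,
          show -((mExp (β+1):ℝ) - (β+1)) = β + 1 - (mExp (β+1):ℝ) from by ring, hexp]
      rw [h3] at h2
      rwa [show mExp β + 1 = mExp (β+1) from hm.symm]
    obtain ⟨h1d, _⟩ := hcore xs S hS0 hSb
    have hysn : ‖ys‖ ≤ K * (‖xs‖ + S) := ys_norm_le hT hmild h1d
    have hLxs : lambdaNorm T (β+1) xs = ‖xs‖ + S := rfl
    have hLys : lambdaNorm T β ys = ‖ys‖ + S := by
      have hpt : ∀ t : Set.Ioi (0:ℝ), (t:ℝ) ^ ((mExp β:ℝ) - β) * ‖dualDeriv T (mExp β) ys t‖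
          = (t:ℝ) ^ ((mExp (β+1):ℝ) - (β+1)) * ‖dualDeriv T (mExp (β+1)) xs t‖ := by
        intro t
        rw [hexp2, show mExp (β+1) = mExp β + 1 from hm,
          mild_shift hT hmild (mExp β) t.2]
      rw [lambdaNorm, hSdef, iSup_congr hpt]
    have hx0 : 0 ≤ ‖xs‖ + S := add_nonneg (norm_nonneg _) hS0
    constructor
    · rw [hLxs, hLys]
      have h4 : (K+2)⁻¹ * (‖xs‖ + S) ≤ 1 * (‖xs‖ + S) := by
        apply mul_le_mul_of_nonneg_right ?_ hx0
        rw [inv_le_one_iff₀]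
        right; linarith
      have h5 : 0 ≤ ‖ys‖ := norm_nonneg ys
      linarith
    · rw [hLxs, hLys]
      have h6 : 0 ≤ K * (‖xs‖ + S) := by positivity
      nlinarith [hysn, hx0]
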